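/- For the Fock kernel P on C^n: (z_l \bar{z}_α P)(Z,Z') = ((b_α z_l)/(2π) + δ_{αl}/π + z_l \bar{z}'_α) P(Z,Z'), where b_α acts in the first variable; in particular at Z' = 0, (z_l \bar{z}_α P)(Z,0) = ((b_α z_l)/(2π) + δ_{αl}/π) P(Z,0). -/

import Mathlib

open Complex MeasureTheory

noncomputable section

/-- Wirtinger derivative `∂/∂z_j` of a function on `ℂⁿ`. -/
def wdz {n : ℕ} (j : Fin n) (f : (Fin n → ℂ) → ℂ) : (Fin n → ℂ) → ℂ :=
  fun z => (fderiv ℝ f z (Pi.single j 1) - Complex.I * fderiv ℝ f z (Pi.single j Complex.I)) / 2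

/-- Wirtinger derivative `∂/∂z̄_j` of a function on `ℂⁿ`. -/
def wdzbar {n : ℕ} (j : Fin n) (f : (Fin n → ℂ) → ℂ) : (Fin n → ℂ) → ℂ :=
  fun z => (fderiv ℝ f z (Pi.single j 1) + Complex.I * fderiv ℝ f z (Pi.single j Complex.I)) / 2

/-- The annihilation-type operator `b_j = -2∂_{z_j} + π z̄_j`. -/
def bOp {n : ℕ} (j : Fin n) (f : (Fin n → ℂ) → ℂ) : (Fin n → ℂ) → ℂ :=
  fun z => -2 * wdz j f z + (Real.pi : ℂ) * (starRingEnd ℂ) (z j) * f z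

/-- The creation-type operator `b_j⁺ = 2∂_{z̄_j} + π z_j`. -/
def bPlusOp {n : ℕ} (j : Fin n) (f : (Fin n → ℂ) → ℂ) : (Fin n → ℂ) → ℂ :=
  fun z => 2 * wdzbar j f z + (Real.pi : ℂ) * z j * f z

/-- The Gaussian `P(z) = exp(-π|z|²/2)` on `ℂⁿ`. -/
def fockP {n : ℕ} (z : Fin n → ℂ) : ℂ :=
  Complex.exp (-((Real.pi : ℂ) / 2) * ∑ j, z j * (starRingEnd ℂ) (z j))

/-- The model harmonic oscillator `L = Σ_l b_l b_l⁺`. -/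
def LOp {n : ℕ} (f : (Fin n → ℂ) → ℂ) : (Fin n → ℂ) → ℂ :=
  fun z => ∑ l, bOp l (bPlusOp l f) z

/-- `b^α = Π_i b_i^{α_i}` (the `b_i` commute, so the order is irrelevant). -/
def bMulti {n : ℕ} (α : Fin n → ℕ) (f : (Fin n → ℂ) → ℂ) : (Fin n → ℂ) → ℂ :=
  (List.finRange n).foldr (fun i g => (bOp i)^[α i] g) f

/-- The Fock (Bergman) reproducing kernel
`P(Z,Z') = exp(-(π/2)(|z|² + |z'|² - 2Σ_l z_l z̄'_l))`. -/
def fockK {n : ℕ} (z z' : Fin n → ℂ) : ℂ :=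
  Complex.exp (-((Real.pi : ℂ) / 2) *
    ((∑ j, z j * (starRingEnd ℂ) (z j)) + (∑ j, z' j * (starRingEnd ℂ) (z' j))
      - 2 * ∑ j, z j * (starRingEnd ℂ) (z' j)))

def projC {n : ℕ} (j : Fin n) : (Fin n → ℂ) →L[ℝ] ℂ := ContinuousLinearMap.proj j

def conjProj {n : ℕ} (j : Fin n) : (Fin n → ℂ) →L[ℝ] ℂ :=
  (Complex.conjCLE.toContinuousLinearMap).comp (ContinuousLinearMap.proj j)

lemma hasFDerivAt_projC {n : ℕ} (j : Fin n) (z : Fin n → ℂ) :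
    HasFDerivAt (fun w : Fin n → ℂ => w j) (projC j) z :=
  (projC j).hasFDerivAt

lemma hasFDerivAt_conjProj {n : ℕ} (j : Fin n) (z : Fin n → ℂ) :
    HasFDerivAt (fun w : Fin n → ℂ => (starRingEnd ℂ) (w j)) (conjProj j) z := by
  have := (conjProj (n := n) j).hasFDerivAt (x := z)
  convert this using 2
  rfl

lemma fockK_hasFDerivAt {n : ℕ} (z' z : Fin n → ℂ) :
    HasFDerivAt (fun w => fockK w z')
      (fockK z z' • ((-((Real.pi:ℂ)/2)) •
        ((∑ j, (z j • conjProj j + (starRingEnd ℂ) (z j) • projC j) + 0)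
          - (2:ℂ) • ∑ j, (starRingEnd ℂ) (z' j) • projC j))) z := by
  have h1 : HasFDerivAt (fun w : Fin n → ℂ => ∑ j, w j * (starRingEnd ℂ) (w j))
      (∑ j, (z j • conjProj j + (starRingEnd ℂ) (z j) • projC j)) z :=
    HasFDerivAt.fun_sum fun j _ => (hasFDerivAt_projC j z).fun_mul (hasFDerivAt_conjProj j z)
  have h2 : HasFDerivAt (fun _ : Fin n → ℂ => ∑ j, z' j * (starRingEnd ℂ) (z' j))
      (0 : (Fin n → ℂ) →L[ℝ] ℂ) z := hasFDerivAt_const _ _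
  have h3 : HasFDerivAt (fun w : Fin n → ℂ => 2 * ∑ j, w j * (starRingEnd ℂ) (z' j))
      ((2:ℂ) • ∑ j, (starRingEnd ℂ) (z' j) • projC j) z :=
    (HasFDerivAt.fun_sum fun j _ => (hasFDerivAt_projC j z).mul_const _).const_mul 2
  have hE := ((h1.add h2).sub h3).const_mul (-((Real.pi:ℂ)/2))
  exact (Complex.hasDerivAt_exp _).comp_hasFDerivAt z hE

lemma main_fderiv {n : ℕ} (l : Fin n) (z' z v : Fin n → ℂ) :
    fderiv ℝ (fun w => w l * fockK w z') z v
      = v l * fockK z z'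
        + z l * (fockK z z' * (-((Real.pi:ℂ)/2) *
            ((∑ j, (z j * (starRingEnd ℂ) (v j) + (starRingEnd ℂ) (z j) * v j))
              - 2 * ∑ j, (starRingEnd ℂ) (z' j) * v j))) := by
  have hf := (hasFDerivAt_projC l z).fun_mul (fockK_hasFDerivAt z' z)
  rw [hf.fderiv]
  simp [projC, conjProj, Finset.mul_sum, mul_comm, mul_assoc, mul_left_comm, Finset.sum_add_distrib,
    mul_add, mul_sub, Complex.conjCLE]
  ring

/-- `(z_l z̄_α P)(Z,Z') = ((b_α z_l)/(2π) + δ_{αl}/π + z_l z̄'_α) P(Z,Z')`; in particular at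
`Z' = 0`, `(z_l z̄_α P)(Z,0) = ((b_α z_l)/(2π) + δ_{αl}/π) P(Z,0)`. -/
theorem z_zbar_kernel_identity {n : ℕ} (l α : Fin n) :
    (∀ z z' : Fin n → ℂ,
        z l * (starRingEnd ℂ) (z α) * fockK z z'
          = (1 / (2 * (Real.pi : ℂ))) * bOp α (fun w => w l * fockK w z') z
            + ((if α = l then (1:ℂ) else 0) / (Real.pi : ℂ)) * fockK z z'
            + z l * (starRingEnd ℂ) (z' α) * fockK z z') ∧
    (∀ z : Fin n → ℂ,
        z l * (starRingEnd ℂ) (z α) * fockK z (0 : Fin n → ℂ)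
          = (1 / (2 * (Real.pi : ℂ))) * bOp α (fun w => w l * fockK w (0 : Fin n → ℂ)) z
            + ((if α = l then (1:ℂ) else 0) / (Real.pi : ℂ)) * fockK z (0 : Fin n → ℂ)) := by
  have hπ : (Real.pi : ℂ) ≠ 0 := by
    exact_mod_cast Complex.ofReal_ne_zero.mpr Real.pi_ne_zero
  have key : ∀ z z' : Fin n → ℂ,
      z l * (starRingEnd ℂ) (z α) * fockK z z'
        = (1 / (2 * (Real.pi : ℂ))) * bOp α (fun w => w l * fockK w z') z
          + ((if α = l then (1:ℂ) else 0) / (Real.pi : ℂ)) * fockK z z'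
          + z l * (starRingEnd ℂ) (z' α) * fockK z z' := by
    intro z z'
    rw [bOp, wdz, main_fderiv l z' z (Pi.single α 1), main_fderiv l z' z (Pi.single α Complex.I)]
    simp only [Pi.single_apply, apply_ite (starRingEnd ℂ), map_zero, map_one, Complex.conj_I,
      mul_ite, ite_mul, mul_zero, zero_mul, mul_one, one_mul, Finset.sum_ite_eq',
      Finset.mem_univ, if_true, Finset.sum_add_distrib]
    by_cases h : α = l
    · subst h; simp only [if_pos rfl, ↓reduceIte]
      field_simp
      ring_nf
      simp only [Complex.I_sq]
      ring
    · simp only [if_neg h, if_neg (Ne.symm h)]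
      field_simp
      ring_nf
      simp only [Complex.I_sq]
      ring
  refine ⟨key, fun z => ?_⟩
  have := key z 0
  simpa using this

end
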